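/- Let A be an associative algebra and r = Σᵢ aᵢ ⊗ bᵢ ∈ A ⊗ A a solution of the associative Yang–Baxter equation r₁₃r₁₂ − r₁₂r₂₃ + r₂₃r₁₃ = 0. Then the linear map R: A → A defined by R(x) = Σᵢ aᵢ x bᵢ is a Rota–Baxter operator of weight 0 on A. -/

import Mathlib

open TensorProduct

noncomputable def triMap {k A : Type*} [Field k] [Ring A] [Algebra k A] (x y : A) :
    A →ₗ[k] A →ₗ[k] A →ₗ[k] A :=
  LinearMap.mk₂ k (fun u v => LinearMap.mulLeft k (u * x * v * y))
    (fun u u' v => by ext w; simp [add_mul, mul_assoc])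
    (fun c u v => by ext w; simp [smul_mul_assoc, mul_assoc])
    (fun u v v' => by ext w; simp [mul_add, add_mul, mul_assoc])
    (fun c u v => by ext w; simp [mul_smul_comm, smul_mul_assoc, mul_assoc])

noncomputable def phiMap {k A : Type*} [Field k] [Ring A] [Algebra k A] (x y : A) :
    A ⊗[k] (A ⊗[k] A) →ₗ[k] A :=
  TensorProduct.lift ((TensorProduct.lift.equiv (RingHom.id k) A A A).toLinearMap ∘ₗ triMap x y)

lemma phiMap_tmul {k A : Type*} [Field k] [Ring A] [Algebra k A] (x y u v w : A) :
    phiMap (k := k) x y (u ⊗ₜ (v ⊗ₜ w)) = u * x * v * y * w := by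
  simp [phiMap, triMap, TensorProduct.lift.equiv, mul_assoc]

/-- If `r = Σ aᵢ ⊗ bᵢ` is a solution of the associative Yang–Baxter equation on
an associative algebra `A`, then `R(x) = Σ aᵢ x bᵢ` is a Rota–Baxter operator of
weight 0 on `A`. -/
theorem aybe_gives_RB_weight_zero {k A : Type*} [Field k] [Ring A] [Algebra k A]
    {ι : Type*} (s : Finset ι) (a b : ι → A)
    (r12 r13 r23 : A ⊗[k] (A ⊗[k] A))
    (h12 : r12 = ∑ i ∈ s, a i ⊗ₜ (b i ⊗ₜ (1 : A)))
    (h13 : r13 = ∑ i ∈ s, a i ⊗ₜ ((1 : A) ⊗ₜ b i))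
    (h23 : r23 = ∑ i ∈ s, (1 : A) ⊗ₜ (a i ⊗ₜ b i))
    (hAYBE : r13 * r12 - r12 * r23 + r23 * r13 = 0)
    (R : A →ₗ[k] A) (hR : ∀ x : A, R x = ∑ i ∈ s, a i * x * b i) :
    ∀ x y : A, R x * R y = R (R x * y + x * R y) := by
  intro x y
  have key := congrArg (phiMap (k := k) x y) hAYBE
  rw [map_add, map_sub, map_zero] at key
  subst h12 h13 h23
  simp only [Finset.sum_mul, Finset.mul_sum, Algebra.TensorProduct.tmul_mul_tmul,
    one_mul, mul_one, map_sum, phiMap_tmul] at key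
  rw [sub_add_eq_add_sub, sub_eq_zero] at key
  have lhs : R x * R y = ∑ i ∈ s, ∑ j ∈ s, a j * x * (b j * a i) * y * b i := by
    rw [hR, hR, Finset.sum_mul_sum, Finset.sum_comm]
    apply Finset.sum_congr rfl; intro i _
    apply Finset.sum_congr rfl; intro j _
    noncomm_ring
  have rhs1 : R (R x * y) = ∑ i ∈ s, ∑ j ∈ s, a j * a i * x * b i * y * b j := by
    rw [hR (R x * y), hR x, Finset.sum_comm]
    apply Finset.sum_congr rfl; intro i _
    rw [Finset.sum_mul, Finset.mul_sum, Finset.sum_mul]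
    apply Finset.sum_congr rfl; intro j _
    noncomm_ring
  have rhs2 : R (x * R y) = ∑ i ∈ s, ∑ j ∈ s, a i * x * a j * y * (b j * b i) := by
    rw [hR (x * R y), hR y]
    apply Finset.sum_congr rfl; intro i _
    rw [Finset.mul_sum, Finset.mul_sum, Finset.sum_mul]
    apply Finset.sum_congr rfl; intro j _
    noncomm_ring
  rw [map_add, lhs, rhs1, rhs2]
  exact key.symm
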